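/- arXiv:2506.12206 — 5 statements merged into one kernel-verified Lean document; each statement's English description precedes it below -/
import Mathlib

section
/- For any polynomial P of degree n with no repeated roots and no roots on the unit circle, |Δ(P)| = (∏_{|α|<1} |P'(α)|) · (∏_{|α|>1} |P'(α)/α^{n-2}|) · M(P)^{n-2}, where M(P) = |A| ∏_j max{1, |α_j|} is the Mahler measure and the products run over the roots of P. -/
open Finset

/-- `|Δ(P)| = (∏_{|α|<1} |P'(α)|) · (∏_{|α|>1} |P'(α)/α^(n-2)|) · M(P)^(n-2)` for a
polynomial with distinct roots, none on the unit circle. -/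
theorem abs_discriminant_eq_inside_outside_mahler (n : ℕ) (hn : 1 ≤ n) (A : ℂ) (hA : A ≠ 0)
    (α : Fin n → ℂ) (hα : Function.Injective α)
    (hcirc : ∀ j, ‖α j‖ ≠ 1)
    (P : ℂ → ℂ) (hP : ∀ z, P z = A * ∏ j, (z - α j)) :
    ‖A ^ (2 * n - 2) *
        ∏ i, ∏ j ∈ univ.filter (fun j => i < j), (α j - α i) ^ 2‖
      = (∏ j ∈ univ.filter (fun j => ‖α j‖ < 1), ‖deriv P (α j)‖)
        * (∏ j ∈ univ.filter (fun j => 1 < ‖α j‖),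
            ‖deriv P (α j) / (α j) ^ ((n : ℤ) - 2)‖)
        * (‖A‖ * ∏ j, max 1 (‖α j‖)) ^ ((n : ℤ) - 2) := by
  classical
  set a := ‖A‖ with ha_def
  have ha : a ≠ 0 := by simpa [ha_def] using hA
  set m : ℤ := (n : ℤ) - 2 with hm_def
  set r : Fin n → ℝ := fun j => ‖α j‖ with hr_def
  -- derivative formula
  have hderiv : ∀ j : Fin n, deriv P (α j) = A * ∏ k ∈ univ.erase j, (α j - α k) := by
    intro j
    have hPf : P = fun z => A * ∏ k, (z - α k) := funext hP
    have h2 : HasDerivAt (fun z : ℂ => ∏ k, (z - α k))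
        (∑ k : Fin n, (∏ l ∈ univ.erase k, (α j - α l)) • (1 : ℂ)) (α j) :=
      HasDerivAt.fun_finsetProd fun k _ => (hasDerivAt_id (α j)).sub_const (α k)
    have h3 := h2.const_mul A
    rw [hPf, h3.deriv]
    congr 1
    rw [Finset.sum_eq_single j]
    · simp
    · intro k _ hk
      rw [Finset.prod_eq_zero (Finset.mem_erase.2 ⟨Ne.symm hk, Finset.mem_univ j⟩) (sub_self (α j))]
      simp
    · simp
  -- absolute value of derivative
  have hD : ∀ j : Fin n, ‖deriv P (α j)‖
      = a * ∏ k ∈ univ.erase j, ‖α j - α k‖ := by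
    intro j; rw [hderiv j, norm_mul, norm_prod]
  set T : ℝ := ∏ j, ∏ k ∈ univ.erase j, ‖α j - α k‖ with hT_def
  have hprodD : (∏ j, ‖deriv P (α j)‖) = a ^ n * T := by
    have h1 : (∏ j, ‖deriv P (α j)‖)
        = ∏ j : Fin n, (a * ∏ k ∈ univ.erase j, ‖α j - α k‖) :=
      Finset.prod_congr rfl fun j _ => hD j
    rw [h1, Finset.prod_mul_distrib, Finset.prod_const, Finset.card_univ, Fintype.card_fin,
      hT_def]
  -- pair product identity
  have hsym : ∀ j k : Fin n, ‖α j - α k‖ = ‖α k - α j‖ := by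
    intro j k; rw [← norm_neg, neg_sub]
  have hsplit : ∀ j : Fin n, univ.erase j
      = univ.filter (fun k => j < k) ∪ univ.filter (fun k => k < j) := by
    intro j; ext k
    simp only [mem_erase, mem_union, mem_filter, mem_univ, true_and, and_true]
    constructor
    · intro h; exact (Ne.lt_or_gt h).symm
    · rintro (h | h)
      · exact ne_of_gt h
      · exact ne_of_lt h
  have hdisj : ∀ j : Fin n,
      Disjoint (univ.filter (fun k => j < k)) (univ.filter (fun k : Fin n => k < j)) := by
    intro j
    rw [Finset.disjoint_left]
    intro k hk hk'
    simp only [mem_filter] at hk hk'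
    exact absurd hk'.2 (not_lt_of_gt hk.2)
  have key : (∏ i, ∏ j ∈ univ.filter (fun j => i < j), (‖α j - α i‖) ^ 2) = T := by
    have h1 : T = (∏ j, ∏ k ∈ univ.filter (fun k => j < k), ‖α j - α k‖)
        * (∏ j, ∏ k ∈ univ.filter (fun k => k < j), ‖α j - α k‖) := by
      rw [hT_def, ← Finset.prod_mul_distrib]
      exact Finset.prod_congr rfl fun j _ => by rw [hsplit j, Finset.prod_union (hdisj j)]
    have h2 : (∏ j, ∏ k ∈ univ.filter (fun k => k < j), ‖α j - α k‖)
        = ∏ k, ∏ j ∈ univ.filter (fun j => k < j), ‖α j - α k‖ := by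
      refine Finset.prod_comm' ?_
      intro x y; simp [and_comm]
    have h3 : (∏ j, ∏ k ∈ univ.filter (fun k => j < k), ‖α j - α k‖)
        = ∏ i, ∏ j ∈ univ.filter (fun j => i < j), ‖α j - α i‖ :=
      Finset.prod_congr rfl fun j _ => Finset.prod_congr rfl fun k _ => hsym j k
    rw [h1, h2, h3, ← Finset.prod_mul_distrib]
    refine Finset.prod_congr rfl fun i _ => ?_
    rw [← Finset.prod_mul_distrib]
    exact Finset.prod_congr rfl fun j _ => sq _
  -- LHS computation
  have hLHS : ‖A ^ (2 * n - 2) *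
      ∏ i, ∏ j ∈ univ.filter (fun j => i < j), (α j - α i) ^ 2‖ = a ^ (2 * n - 2) * T := by
    rw [norm_mul, norm_pow, norm_prod, ← key]
    congr 1
    refine Finset.prod_congr rfl fun i _ => ?_
    rw [norm_prod]
    exact Finset.prod_congr rfl fun j _ => norm_pow _ 2
  rw [hLHS]
  -- split univ into inside and outside
  set I : Finset (Fin n) := univ.filter (fun j => ‖α j‖ < 1) with hI_def
  set O : Finset (Fin n) := univ.filter (fun j => 1 < ‖α j‖) with hO_def
  have hIO : Disjoint I O := by
    rw [Finset.disjoint_left]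
    intro k hk hk'
    simp only [hI_def, hO_def, mem_filter] at hk hk'
    exact absurd hk'.2 (not_lt_of_gt hk.2)
  have hunion : I ∪ O = univ := by
    ext k
    simp only [hI_def, hO_def, mem_union, mem_filter, mem_univ, true_and, iff_true]
    exact (Ne.lt_or_gt (hcirc k))
  -- Mahler measure product
  have hmax : (∏ j, max 1 (‖α j‖)) = ∏ j ∈ O, r j := by
    rw [← hunion, Finset.prod_union hIO]
    have h1 : (∏ j ∈ I, max 1 (‖α j‖)) = 1 := by
      refine Finset.prod_eq_one fun j hj => ?_
      simp only [hI_def, mem_filter] at hj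
      exact max_eq_left (le_of_lt hj.2)
    have h2 : (∏ j ∈ O, max 1 (‖α j‖)) = ∏ j ∈ O, r j := by
      refine Finset.prod_congr rfl fun j hj => ?_
      simp only [hO_def, mem_filter] at hj
      exact max_eq_right (le_of_lt hj.2)
    rw [h1, h2, one_mul]
  have hR : (0 : ℝ) < ∏ j ∈ O, r j := by
    refine Finset.prod_pos fun j hj => ?_
    simp only [hO_def, mem_filter] at hj
    exact lt_trans one_pos hj.2
  set R : ℝ := ∏ j ∈ O, r j with hR_def
  -- outside product
  have hout : (∏ j ∈ O, ‖deriv P (α j) / (α j) ^ m‖)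
      = (∏ j ∈ O, ‖deriv P (α j)‖) / R ^ m := by
    rw [hR_def]
    rw [← Finset.prod_zpow]
    rw [← Finset.prod_div_distrib]
    refine Finset.prod_congr rfl fun j hj => ?_
    rw [norm_div, norm_zpow]
  rw [hout]
  have hsplitD : (∏ j ∈ I, ‖deriv P (α j)‖)
      * (∏ j ∈ O, ‖deriv P (α j)‖) = a ^ n * T := by
    rw [← Finset.prod_union hIO, hunion, hprodD]
  have hRm : R ^ m ≠ 0 := zpow_ne_zero m (ne_of_gt hR)
  have ham : (a : ℝ) ^ (2 * n - 2 : ℕ) = a ^ n * a ^ m := by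
    rw [← zpow_natCast a n, ← zpow_add₀ ha, ← zpow_natCast a (2 * n - 2)]
    congr 1
    simp only [hm_def]
    omega
  have hfin : (∏ j ∈ I, ‖deriv P (α j)‖)
      * ((∏ j ∈ O, ‖deriv P (α j)‖) / R ^ m) * (a ^ m * R ^ m)
      = ((∏ j ∈ I, ‖deriv P (α j)‖)
        * (∏ j ∈ O, ‖deriv P (α j)‖)) * a ^ m := by
    field_simp
  rw [hmax, mul_zpow, ham, hfin, hsplitD]
  ring
end

section
/- Let f be analytic on the closed unit disk with f(0) ≠ 0, and let M_f = max_{|z|=1} |f(z)|. Then for every r ∈ (0,1), the number of zeros of f in the closed disk {|z| ≤ r} (counted with multiplicity) is at most (1/(1-r)) · log(M_f / |f(0)|). -/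
open Finset Metric Topology Filter

section helpers

-- dslope is analytic on nhds of the closed ball if f is and f z = 0 at an interior point
lemma dslope_analyticOnNhd {f : ℂ → ℂ} (hf : AnalyticOnNhd ℂ f (closedBall (0:ℂ) 1))
    {z : ℂ} (hz : z ∈ closedBall (0:ℂ) 1) :
    AnalyticOnNhd ℂ (dslope f z) (closedBall (0:ℂ) 1) := by
  intro w hw
  rcases eq_or_ne w z with rfl | hwz
  · obtain ⟨p, hp⟩ := hf w hw
    exact ⟨_, hp.has_fpower_series_dslope_fslope⟩
  · have h1 : AnalyticAt ℂ (fun u => (f u - f z) / (u - z)) w :=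
      ((hf w hw).sub analyticAt_const).div (analyticAt_id.sub analyticAt_const)
        (sub_ne_zero.2 hwz)
    refine h1.congr ?_
    filter_upwards [eventually_ne_nhds hwz] with u hu
    rw [dslope_of_ne _ hu, slope_def_field]

lemma order_dslope_self {f : ℂ → ℂ} {z : ℂ} (hf : AnalyticAt ℂ f z)
    (hd : AnalyticAt ℂ (dslope f z) z) {n : ℕ} (hn : analyticOrderAt f z = ((n + 1 : ℕ) : ℕ∞)) :
    analyticOrderAt (dslope f z) z = n := by
  obtain ⟨g, hg, hgz, hfg⟩ := (hf.analyticOrderAt_eq_natCast (n := n + 1)).mp hn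
  have hfz : f z = 0 := by
    have h := hfg.self_of_nhds
    rw [sub_self, zero_pow (Nat.succ_ne_zero n), zero_smul] at h
    exact h
  have key : ∀ᶠ u in 𝓝[≠] z, dslope f z u = (u - z) ^ n * g u := by
    filter_upwards [hfg.filter_mono nhdsWithin_le_nhds, self_mem_nhdsWithin] with u hu hu'
    have hu'' : u ≠ z := hu'
    rw [dslope_of_ne _ hu'', slope_def_field, hfz, sub_zero, hu, smul_eq_mul]
    field_simp [sub_ne_zero.2 hu'']
    ring
  have hh : AnalyticAt ℂ (fun u => (u - z) ^ n * g u) z :=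
    ((analyticAt_id.sub analyticAt_const).pow n).mul hg
  have ev : ∀ᶠ u in 𝓝 z, dslope f z u = (u - z) ^ n * g u :=
    (hd.frequently_eq_iff_eventually_eq hh).mp key.frequently
  exact (hd.analyticOrderAt_eq_natCast (n := n)).mpr ⟨g, hg, hgz, by simpa [smul_eq_mul] using ev⟩

lemma order_dslope_ne {f : ℂ → ℂ} {z w : ℂ} (hf : AnalyticAt ℂ f w)
    (hd : AnalyticAt ℂ (dslope f z) w) (hw : w ≠ z) (hfz : f z = 0) {n : ℕ}
    (hn : analyticOrderAt f w = (n : ℕ∞)) : analyticOrderAt (dslope f z) w = n := by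
  obtain ⟨g, hg, hgz, hfg⟩ := (hf.analyticOrderAt_eq_natCast (n := n)).mp hn
  refine (hd.analyticOrderAt_eq_natCast (n := n)).mpr ⟨fun u => (u - z)⁻¹ * g u,
    ((analyticAt_id.sub analyticAt_const).inv (sub_ne_zero.2 hw)).mul hg,
    by simp [sub_ne_zero.2 hw, hgz], ?_⟩
  filter_upwards [hfg, eventually_ne_nhds hw] with u hu hu'
  rw [dslope_of_ne _ hu', slope_def_field, hfz, sub_zero, hu, smul_eq_mul, smul_eq_mul]
  field_simp [sub_ne_zero.2 hu']

lemma divide_zeros : ∀ (n : ℕ) (f : ℂ → ℂ) (hf : AnalyticOnNhd ℂ f (closedBall (0:ℂ) 1))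
    (μ : ℂ → ℕ) (_ : ∀ w (hw : w ∈ closedBall (0:ℂ) 1), analyticOrderAt f w = (μ w : ℕ∞))
    (s : Multiset ℂ) (_ : Multiset.card s = n)
    (_ : ∀ z ∈ s, z ∈ closedBall (0:ℂ) 1)
    (_ : ∀ z ∈ s, s.count z ≤ μ z),
    ∃ g, AnalyticOnNhd ℂ g (closedBall (0:ℂ) 1) ∧
      ∀ w, f w = (s.map (fun z => w - z)).prod * g w := by
  intro n
  induction n with
  | zero =>
    intro f hf μ hμ s hcard hmem hcount
    rw [Multiset.card_eq_zero] at hcard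
    exact ⟨f, hf, by simp [hcard]⟩
  | succ n ih =>
    intro f hf μ hμ s hcard hmem hcount
    have hs : s ≠ 0 := by rintro rfl; simp at hcard
    obtain ⟨z, hzs⟩ := Multiset.exists_mem_of_ne_zero hs
    have hzb : z ∈ closedBall (0:ℂ) 1 := hmem z hzs
    have hc1 : 1 ≤ s.count z := Multiset.one_le_count_iff_mem.mpr hzs
    have hμz : 1 ≤ μ z := le_trans hc1 (hcount z hzs)
    have hfz : f z = 0 := by
      by_contra hne
      have h0 : analyticOrderAt f z = ((0 : ℕ) : ℕ∞) :=
        ((hf z hzb).analyticOrderAt_eq_natCast (n := 0)).mpr ⟨f, hf z hzb, hne, by simp⟩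
      rw [hμ z hzb] at h0
      have : μ z = 0 := by exact_mod_cast h0
      omega
    have hf' : AnalyticOnNhd ℂ (dslope f z) (closedBall (0:ℂ) 1) :=
      dslope_analyticOnNhd hf hzb
    have hμ' : ∀ w (hw : w ∈ closedBall (0:ℂ) 1),
        analyticOrderAt (dslope f z) w = ((Function.update μ z (μ z - 1)) w : ℕ∞) := by
      intro w hw
      rcases eq_or_ne w z with rfl | hwz
      · rw [Function.update_self]
        exact order_dslope_self (hf w hw) (hf' w hw)
          (by rw [hμ w hw]; congr 1; omega)
      · rw [Function.update_of_ne hwz]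
        exact order_dslope_ne (hf w hw) (hf' w hw) hwz hfz (hμ w hw)
    obtain ⟨g, hg, hfg⟩ := ih (dslope f z) hf' (Function.update μ z (μ z - 1)) hμ' (s.erase z)
      (by rw [Multiset.card_erase_of_mem hzs, hcard]; rfl)
      (fun w hw => hmem w (Multiset.mem_of_mem_erase hw))
      (by
        intro w hw
        rcases eq_or_ne w z with rfl | hwz
        · rw [Multiset.count_erase_self, Function.update_self]
          have := hcount w hzs; omega
        · rw [Multiset.count_erase_of_ne hwz, Function.update_of_ne hwz]
          exact hcount w (Multiset.mem_of_mem_erase hw))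
    refine ⟨g, hg, fun w => ?_⟩
    have hsplit : f w = (w - z) * dslope f z w := by
      have h := sub_smul_dslope f z w
      rw [hfz, sub_zero] at h
      rw [← h, smul_eq_mul]
    calc f w = (w - z) * dslope f z w := hsplit
      _ = (w - z) * ((((s.erase z).map (fun z' => w - z')).prod) * g w) := by rw [hfg w]
      _ = (s.map (fun z' => w - z')).prod * g w := by
          conv_rhs => rw [← Multiset.cons_erase hzs]
          rw [Multiset.map_cons, Multiset.prod_cons]; ring

lemma blaschke_abs {w z : ℂ} (hw : ‖w‖ = 1) :
    ‖1 - (starRingEnd ℂ) z * w‖ = ‖w - z‖ := by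
  have h1 : (starRingEnd ℂ) w * w = 1 := by
    rw [mul_comm, Complex.mul_conj]
    norm_cast
    rw [Complex.normSq_eq_norm_sq, hw]; norm_num
  have h2 : ‖1 - (starRingEnd ℂ) z * w‖
      = ‖1 - z * (starRingEnd ℂ) w‖ := by
    rw [← Complex.norm_conj]
    congr 1
    simp [map_sub, map_mul]
  have h3 : 1 - z * (starRingEnd ℂ) w = (starRingEnd ℂ) w * (w - z) := by
    rw [mul_sub, h1]; ring
  rw [h2, h3, norm_mul, Complex.norm_conj, hw, one_mul]

end helpers

/-- Jensen-type bound: if `f` is analytic on (a neighborhood of) the closed unit disk with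
`f 0 ≠ 0`, then for `r ∈ (0,1)` the number of zeros of `f` in `{|z| ≤ r}` counted with
multiplicity is at most `(1/(1-r)) log (M_f / |f 0|)`. -/
theorem zero_count_le_jensen (f : ℂ → ℂ)
    (hf : AnalyticOnNhd ℂ f (Metric.closedBall (0:ℂ) 1)) (h0 : f 0 ≠ 0)
    (Mf : ℝ) (hMf : IsGreatest ((fun z => ‖f z‖) '' Metric.sphere (0:ℂ) 1) Mf)
    (r : ℝ) (hr : r ∈ Set.Ioo (0:ℝ) 1)
    (Z : Finset ℂ) (hZ : ∀ z, z ∈ Z ↔ z ∈ Metric.closedBall (0:ℂ) r ∧ f z = 0)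
    (m : ℂ → ℕ)
    (hm : ∀ z (hz : z ∈ Metric.closedBall (0:ℂ) 1), analyticOrderAt f z = (m z : ℕ∞)) :
    (∑ z ∈ Z, m z : ℝ) ≤ (1 / (1 - r)) * Real.log (Mf / ‖f 0‖) := by
  obtain ⟨hr0, hr1⟩ := hr
  have hsub : closedBall (0:ℂ) r ⊆ closedBall (0:ℂ) 1 :=
    closedBall_subset_closedBall hr1.le
  set n : ℕ := ∑ z ∈ Z, m z with hn
  set s : Multiset ℂ := Z.val.bind (fun z => Multiset.replicate (m z) z) with hsdef
  have hmemZ : ∀ z ∈ s, z ∈ Z := by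
    intro z hz
    rw [hsdef, Multiset.mem_bind] at hz
    obtain ⟨a, ha, hz⟩ := hz
    rw [Multiset.eq_of_mem_replicate hz]
    exact ha
  have hmem : ∀ z ∈ s, z ∈ closedBall (0:ℂ) 1 :=
    fun z hz => hsub ((hZ z).mp (hmemZ z hz)).1
  have hcount : ∀ z ∈ s, s.count z ≤ m z := by
    intro z hz
    rw [hsdef, Multiset.count_bind]
    have h : (Z.val.map fun b => (Multiset.replicate (m b) b).count z).sum
        = ∑ b ∈ Z, if b = z then m b else 0 := by
      simp [Multiset.count_replicate]
    rw [h, Finset.sum_ite_eq' Z z m]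
    simp [hmemZ z hz]
  have hcard : Multiset.card s = n := by
    rw [hsdef]; simp [Multiset.card_bind]; rfl
  have hprod : ∀ w, (s.map (fun z => w - z)).prod = ∏ z ∈ Z, (w - z) ^ (m z) := by
    intro w
    rw [hsdef, Multiset.map_bind, Multiset.prod_bind]
    simp [Multiset.map_replicate, Multiset.prod_replicate]
  obtain ⟨g, hg, hfg⟩ := divide_zeros n f hf m hm s hcard hmem hcount
  have hfg' : ∀ w, f w = (∏ z ∈ Z, (w - z) ^ (m z)) * g w := by
    intro w; rw [hfg w, hprod w]
  -- the analytic function g * (Blaschke denominators)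
  set B : ℂ → ℂ := fun w => ∏ z ∈ Z, (1 - (starRingEnd ℂ) z * w) ^ (m z) with hBdef
  have hgB : AnalyticOnNhd ℂ (fun w => g w * B w) (closedBall (0:ℂ) 1) := by
    intro w hw
    exact (hg w hw).mul (Finset.analyticAt_fun_prod _
      (fun z _ => (analyticAt_const.sub (analyticAt_const.mul analyticAt_id)).pow _))
  -- maximum modulus
  have hg0 : ‖g 0‖ ≤ Mf := by
    have hcl : closure (ball (0:ℂ) 1) = closedBall (0:ℂ) 1 := closure_ball 0 one_ne_zero
    have hd : DiffContOnCl ℂ (fun w => g w * B w) (ball (0:ℂ) 1) :=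
      DifferentiableOn.diffContOnCl (by
        rw [hcl]
        exact fun w hw => ((hgB w hw).differentiableAt).differentiableWithinAt)
    have hbound : ∀ w ∈ frontier (ball (0:ℂ) 1), ‖g w * B w‖ ≤ Mf := by
      intro w hw
      rw [frontier_ball 0 one_ne_zero] at hw
      have hw1 : ‖w‖ = 1 := by
        rwa [mem_sphere_zero_iff_norm] at hw
      have habs : ‖g w * B w‖ = ‖f w‖ := by
        rw [hfg' w, hBdef]
        simp only [norm_mul]
        rw [mul_comm (‖∏ z ∈ Z, (w - z) ^ m z‖)]
        congr 1
        rw [norm_prod, norm_prod]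
        exact Finset.prod_congr rfl fun z _ => by
          rw [norm_pow, norm_pow, blaschke_abs hw1]
      calc ‖g w * B w‖ = ‖f w‖ := habs
        _ ≤ Mf := hMf.2 ⟨w, hw, rfl⟩
    have h0mem : (0:ℂ) ∈ closure (ball (0:ℂ) 1) := by
      rw [hcl]; exact mem_closedBall_self one_pos.le
    have := Complex.norm_le_of_forall_mem_frontier_norm_le isBounded_ball hd hbound h0mem
    have hB0 : B 0 = 1 := by
      rw [hBdef]; simp
    rw [hB0, mul_one] at this
    exact this
  -- |f 0| ≤ r^n * Mf
  have hineq : ‖f 0‖ ≤ r ^ n * Mf := by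
    have h1 : ‖f 0‖ = (∏ z ∈ Z, ‖z‖ ^ (m z)) * ‖g 0‖ := by
      rw [hfg' 0, norm_mul, norm_prod]
      congr 1
      exact Finset.prod_congr rfl fun z _ => by
        rw [norm_pow]
        congr 1
        rw [zero_sub, norm_neg]
    have h2 : (∏ z ∈ Z, ‖z‖ ^ (m z)) ≤ ∏ z ∈ Z, r ^ (m z) := by
      refine Finset.prod_le_prod (fun z _ => by positivity) (fun z hz => ?_)
      have hzr : ‖z‖ ≤ r := by
        have := ((hZ z).mp hz).1
        rwa [mem_closedBall, Complex.dist_eq, sub_zero] at this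
      exact pow_le_pow_left₀ (norm_nonneg z) hzr _
    have h3 : (∏ z ∈ Z, r ^ (m z)) = r ^ n := by
      rw [hn, ← Finset.prod_pow_eq_pow_sum]
    calc ‖f 0‖ = (∏ z ∈ Z, ‖z‖ ^ (m z)) * ‖g 0‖ := h1
      _ ≤ (∏ z ∈ Z, r ^ (m z)) * Mf :=
          mul_le_mul h2 hg0 (norm_nonneg _) (by positivity)
      _ = r ^ n * Mf := by rw [h3]
  -- final arithmetic
  set A : ℝ := ‖f 0‖ with hA
  have hApos : 0 < A := norm_pos_iff.mpr h0
  have hrn : (0:ℝ) < r ^ n := pow_pos hr0 n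
  have hMfpos : 0 < Mf := by nlinarith
  have hlog : Real.log A ≤ (n:ℝ) * Real.log r + Real.log Mf := by
    have := Real.log_le_log hApos hineq
    rwa [Real.log_mul (ne_of_gt hrn) (ne_of_gt hMfpos), Real.log_pow] at this
  have hL : (n:ℝ) * (-Real.log r) ≤ Real.log (Mf / A) := by
    rw [Real.log_div (ne_of_gt hMfpos) (ne_of_gt hApos)]
    linarith
  have h1r : 1 - r ≤ -Real.log r := by
    have := Real.log_le_sub_one_of_pos hr0
    linarith
  have hfinal : (n:ℝ) * (1 - r) ≤ Real.log (Mf / A) := by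
    have : (n:ℝ) * (1 - r) ≤ (n:ℝ) * (-Real.log r) :=
      mul_le_mul_of_nonneg_left h1r (Nat.cast_nonneg n)
    linarith
  have hcast : (∑ z ∈ Z, (m z : ℝ)) = (n : ℝ) := by
    rw [hn]; push_cast; ring
  rw [hcast]
  have h1rpos : (0:ℝ) < 1 - r := by linarith
  calc (n:ℝ) = ((n:ℝ) * (1 - r)) / (1 - r) := by field_simp
    _ ≤ Real.log (Mf / A) / (1 - r) := by
        exact (div_le_div_iff_of_pos_right h1rpos).mpr hfinal
    _ = (1 / (1 - r)) * Real.log (Mf / A) := by ring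
end

section
/- For any analytic function f on the closed unit disk with f(0) ≠ 0, Jensen's formula combined with the bound log(1/r) ≥ 1 - r for r ∈ (0,1) yields: the zero-counting bound #{|α| ≤ r : f(α) = 0} ≤ (1/log(1/r)) · log(M_f/|f(0)|), where M_f is the maximum of |f| on the unit circle. -/
open Finset

open scoped Topology

private lemma analyticAt_dslope {F : ℂ → ℂ} {a z : ℂ} (hz : AnalyticAt ℂ F z)
    (hFa : z = a → AnalyticAt ℂ F a) : AnalyticAt ℂ (dslope F a) z := by
  rcases eq_or_ne z a with rfl | hne
  · obtain ⟨p, hp⟩ := hFa rfl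
    exact ⟨p.fslope, hp.has_fpower_series_dslope_fslope⟩
  · have h1 : AnalyticAt ℂ (fun w => (w - a)⁻¹ • (F w - F a)) z := by
      refine AnalyticAt.fun_smul ?_ (hz.sub analyticAt_const)
      exact ((analyticAt_id.sub analyticAt_const).inv (sub_ne_zero.mpr hne))
    refine h1.congr ?_
    filter_upwards [isOpen_ne.mem_nhds hne] with w hw
    rw [dslope_of_ne _ hw]; simp [slope, vsub_eq_sub]

/-- Factor out a zero of known local order globally on the closed disk. -/
private lemma factor_pow : ∀ (n : ℕ) (F : ℂ → ℂ) (a : ℂ),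
    AnalyticOnNhd ℂ F (Metric.closedBall (0:ℂ) 1) → a ∈ Metric.closedBall (0:ℂ) 1 →
    (∃ g, AnalyticAt ℂ g a ∧ ∀ᶠ z in 𝓝 a, F z = (z - a) ^ n * g z) →
    ∃ G, AnalyticOnNhd ℂ G (Metric.closedBall (0:ℂ) 1) ∧ ∀ z, F z = (z - a) ^ n * G z := by
  intro n
  induction n with
  | zero => intro F a hF _ _; exact ⟨F, hF, fun z => by simp⟩
  | succ n ih =>
    intro F a hF ha ⟨g, hg, hev⟩
    have hFa : F a = 0 := by
      have := hev.self_of_nhds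
      simpa using this
    set F₁ := dslope F a with hF₁
    have key : ∀ z, F z = (z - a) * F₁ z := by
      intro z
      rcases eq_or_ne z a with rfl | hne
      · simp [hFa]
      · rw [hF₁, dslope_of_ne _ hne, slope, vsub_eq_sub, smul_eq_mul, hFa, sub_zero]
        field_simp [sub_ne_zero.mpr hne, hFa]
    have hF₁a : AnalyticOnNhd ℂ F₁ (Metric.closedBall (0:ℂ) 1) := fun z hz =>
      analyticAt_dslope (hF z hz) (fun _ => hF a ha)
    -- local factorization of F₁ at a
    have hev1 : ∀ᶠ z in 𝓝 a, F₁ z = (z - a) ^ n * g z := by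
      have hpunct : ∀ᶠ z in 𝓝[≠] a, F₁ z = (z - a) ^ n * g z := by
        filter_upwards [eventually_nhdsWithin_of_eventually_nhds hev,
          self_mem_nhdsWithin] with z hz hzne
        have h2 : (z - a) ≠ 0 := sub_ne_zero.mpr hzne
        have := key z
        rw [hz] at this
        have : (z - a) * ((z - a) ^ n * g z) = (z - a) * F₁ z := by
          rw [← this]; ring
        exact (mul_left_cancel₀ h2 this).symm
      have hc1 : Filter.Tendsto F₁ (𝓝[≠] a) (𝓝 (F₁ a)) :=
        ((hF₁a a ha).continuousAt.continuousWithinAt)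
      have hc2 : Filter.Tendsto (fun z => (z - a) ^ n * g z) (𝓝[≠] a)
          (𝓝 ((a - a) ^ n * g a)) := by
        refine Filter.Tendsto.mono_left ?_ nhdsWithin_le_nhds
        exact (Filter.Tendsto.mul (((continuous_id.sub continuous_const).pow n).tendsto a)
          hg.continuousAt)
      have heq : F₁ a = (a - a) ^ n * g a :=
        tendsto_nhds_unique (hc1.congr' hpunct) hc2
      have := eventually_nhdsWithin_iff.mp hpunct
      filter_upwards [this] with z hz
      rcases eq_or_ne z a with rfl | hne
      · exact heq
      · exact hz hne
    obtain ⟨G, hG, hfac⟩ := ih F₁ a hF₁a ha ⟨g, hg, hev1⟩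
    refine ⟨G, hG, fun z => ?_⟩
    rw [key z, hfac z]; ring

/-- Factor out finitely many zeros of known local orders. -/
private lemma factor_finset (m : ℂ → ℕ) : ∀ (Z : Finset ℂ) (F : ℂ → ℂ),
    AnalyticOnNhd ℂ F (Metric.closedBall (0:ℂ) 1) →
    (∀ α ∈ Z, α ∈ Metric.closedBall (0:ℂ) 1) →
    (∀ α ∈ Z, ∃ g, AnalyticAt ℂ g α ∧ ∀ᶠ z in 𝓝 α, F z = (z - α) ^ (m α) * g z) →
    ∃ G, AnalyticOnNhd ℂ G (Metric.closedBall (0:ℂ) 1) ∧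
      ∀ z, F z = G z * ∏ α ∈ Z, (z - α) ^ (m α) := by
  classical
  intro Z
  induction Z using Finset.induction with
  | empty => intro F hF _ _; exact ⟨F, hF, fun z => by simp⟩
  | @insert a Z ha ih =>
    intro F hF hball hloc
    obtain ⟨G₁, hG₁, hfac1⟩ := factor_pow (m a) F a hF
      (hball a (mem_insert_self a Z)) (hloc a (mem_insert_self a Z))
    have hZloc : ∀ β ∈ Z, ∃ g, AnalyticAt ℂ g β ∧
        ∀ᶠ z in 𝓝 β, G₁ z = (z - β) ^ (m β) * g z := by
      intro β hβ
      have hβa : β ≠ a := fun h => ha (h ▸ hβ)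
      obtain ⟨g, hg, hev⟩ := hloc β (mem_insert_of_mem hβ)
      refine ⟨fun z => g z * ((z - a) ^ (m a))⁻¹, ?_, ?_⟩
      · exact hg.mul (((analyticAt_id.sub analyticAt_const).pow (m a)).inv
          (pow_ne_zero _ (sub_ne_zero.mpr hβa)))
      · filter_upwards [hev, eventually_ne_nhds hβa] with z hz hzne
        have h2 : (z - a) ^ (m a) ≠ 0 := pow_ne_zero _ (sub_ne_zero.mpr hzne)
        have := hfac1 z
        rw [hz] at this
        field_simp
        rw [this]; ring
    obtain ⟨G, hG, hfac⟩ := ih G₁ hG₁ (fun β hβ => hball β (mem_insert_of_mem hβ)) hZloc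
    refine ⟨G, hG, fun z => ?_⟩
    rw [Finset.prod_insert ha, hfac1 z, hfac z]; ring

private lemma analyticOnNhd_finset_prod {s : Set ℂ} (Z : Finset ℂ) (F : ℂ → ℂ → ℂ)
    (h : ∀ α ∈ Z, AnalyticOnNhd ℂ (F α) s) :
    AnalyticOnNhd ℂ (fun z => ∏ α ∈ Z, F α z) s := by
  classical
  induction Z using Finset.induction with
  | empty => simpa using (analyticOnNhd_const : AnalyticOnNhd ℂ (fun _ => (1:ℂ)) s)
  | @insert a Z ha ih =>
    have : (fun z => ∏ α ∈ insert a Z, F α z) = fun z => F a z * ∏ α ∈ Z, F α z := by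
      funext z; rw [Finset.prod_insert ha]
    rw [this]
    exact (h a (mem_insert_self a Z)).mul (ih fun α hα => h α (mem_insert_of_mem hα))

/-- Jensen-type bound: if `f` is analytic on (a neighborhood of) the closed unit disk with
`f 0 ≠ 0`, then for `r ∈ (0,1)` the number of zeros of `f` in `{|z| ≤ r}` counted with
multiplicity is at most `(1/log(1/r)) log (M_f / |f 0|)`. -/
theorem zero_count_le_jensen_log (f : ℂ → ℂ)
    (hf : AnalyticOnNhd ℂ f (Metric.closedBall (0:ℂ) 1)) (h0 : f 0 ≠ 0)
    (Mf : ℝ) (hMf : IsGreatest ((fun z => ‖f z‖) '' Metric.sphere (0:ℂ) 1) Mf)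
    (r : ℝ) (hr : r ∈ Set.Ioo (0:ℝ) 1)
    (Z : Finset ℂ) (hZ : ∀ z, z ∈ Z ↔ z ∈ Metric.closedBall (0:ℂ) r ∧ f z = 0)
    (m : ℂ → ℕ)
    (hm : ∀ z (hz : z ∈ Metric.closedBall (0:ℂ) 1), analyticOrderAt f z = (m z : ℕ∞)) :
    (∑ z ∈ Z, m z : ℝ) ≤ (1 / Real.log (1 / r)) * Real.log (Mf / ‖f 0‖) := by
  classical
  obtain ⟨hr0, hr1⟩ := hr
  have hball : ∀ α ∈ Z, α ∈ Metric.closedBall (0:ℂ) 1 := by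
    intro α hα
    have := ((hZ α).mp hα).1
    rw [Metric.mem_closedBall] at this ⊢
    linarith
  have hnorm_le : ∀ α ∈ Z, ‖α‖ ≤ r := by
    intro α hα
    have := ((hZ α).mp hα).1
    rwa [Metric.mem_closedBall, dist_zero_right] at this
  -- local factorizations
  have hloc : ∀ α ∈ Z, ∃ g, AnalyticAt ℂ g α ∧
      ∀ᶠ z in 𝓝 α, f z = (z - α) ^ (m α) * g z := by
    intro α hα
    have h1 := hm α (hball α hα)
    obtain ⟨g, hg, _, hev⟩ := (hf α (hball α hα)).analyticOrderAt_eq_natCast.mp h1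
    exact ⟨g, hg, by simpa [smul_eq_mul] using hev⟩
  obtain ⟨G, hG, hfac⟩ := factor_finset m Z f hf hball hloc
  -- the Blaschke-modified function
  set h : ℂ → ℂ := fun z => G z * ∏ α ∈ Z, (1 - (starRingEnd ℂ) α * z) ^ (m α) with hh
  have hh_an : AnalyticOnNhd ℂ h (Metric.closedBall (0:ℂ) 1) := by
    refine hG.mul (analyticOnNhd_finset_prod Z _ fun α _ => fun z _ => ?_)
    exact ((analyticAt_const.sub (analyticAt_const.mul analyticAt_id)).pow (m α))
  -- maximum modulus
  have hmax : ‖h 0‖ ≤ Mf := by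
    have hd : DiffContOnCl ℂ h (Metric.ball (0:ℂ) 1) := by
      refine DifferentiableOn.diffContOnCl ?_
      rw [closure_ball (0:ℂ) one_ne_zero]
      exact fun z hz => ((hh_an z hz).differentiableAt).differentiableWithinAt
    refine Complex.norm_le_of_forall_mem_frontier_norm_le Metric.isBounded_ball hd ?_ ?_
    · intro z hz
      rw [frontier_ball (0:ℂ) one_ne_zero] at hz
      have hz1 : ‖z‖ = 1 := by rwa [mem_sphere_zero_iff_norm] at hz
      have hkey : ∀ α : ℂ, ‖1 - (starRingEnd ℂ) α * z‖ = ‖z - α‖ := by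
        intro α
        have : 1 - (starRingEnd ℂ) α * z = z * (starRingEnd ℂ) (z - α) := by
          have hzz : z * (starRingEnd ℂ) z = 1 := by
            rw [Complex.mul_conj]
            norm_cast
            rw [Complex.normSq_eq_norm_sq, hz1]
            norm_num
          rw [map_sub]
          rw [mul_sub, hzz]
          ring
        rw [this, norm_mul, RCLike.norm_conj, hz1, one_mul]
      have h1 : ‖h z‖ = ‖G z‖ * ∏ α ∈ Z, ‖z - α‖ ^ (m α) := by
        rw [hh, norm_mul, norm_prod]
        congr 1
        exact Finset.prod_congr rfl fun α _ => by rw [norm_pow, hkey α]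
      have h2 : ‖f z‖ = ‖G z‖ * ∏ α ∈ Z, ‖z - α‖ ^ (m α) := by
        rw [hfac z, norm_mul, norm_prod]
        congr 1
        exact Finset.prod_congr rfl fun α _ => by rw [norm_pow]
      rw [h1, ← h2]
      have : ‖f z‖ ≤ Mf := hMf.2 ⟨z, hz, rfl⟩
      exact this
    · rw [closure_ball (0:ℂ) one_ne_zero]
      exact Metric.mem_closedBall_self zero_le_one
  set n : ℕ := ∑ z ∈ Z, m z with hn
  have hh0 : h 0 = G 0 := by
    rw [hh]; simp
  have hf0 : ‖f 0‖ = ‖G 0‖ * ∏ α ∈ Z, ‖α‖ ^ (m α) := by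
    rw [hfac 0, norm_mul, norm_prod]
    congr 1
    exact Finset.prod_congr rfl fun α _ => by rw [norm_pow, zero_sub, norm_neg]
  have hprod_le : (∏ α ∈ Z, ‖α‖ ^ (m α)) ≤ r ^ n := by
    rw [hn, ← Finset.prod_pow_eq_pow_sum]
    refine Finset.prod_le_prod (fun α _ => by positivity) (fun α hα => ?_)
    exact pow_le_pow_left₀ (norm_nonneg α) (hnorm_le α hα) (m α)
  have hkey2 : ‖f 0‖ ≤ Mf * r ^ n := by
    rw [hf0]
    have hG0 : ‖G 0‖ ≤ Mf := by rwa [hh0] at hmax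
    have := mul_le_mul hG0 hprod_le (by positivity) (le_trans (norm_nonneg _) hG0)
    linarith
  have hf0pos : 0 < ‖f 0‖ := norm_pos_iff.mpr h0
  have hrn : 0 < r ^ n := pow_pos hr0 n
  have hMfpos : 0 < Mf := by nlinarith
  have hlr : 0 < Real.log (1 / r) := Real.log_pos (one_lt_one_div hr0 hr1)
  have hlog : (n : ℝ) * Real.log (1 / r) ≤ Real.log (Mf / ‖f 0‖) := by
    have h1 : Real.log ‖f 0‖ ≤ Real.log (Mf * r ^ n) := Real.log_le_log hf0pos hkey2
    rw [Real.log_mul (ne_of_gt hMfpos) (ne_of_gt hrn), Real.log_pow] at h1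
    rw [Real.log_div (ne_of_gt hMfpos) (norm_pos_iff.mpr h0).ne']
    rw [one_div, Real.log_inv]
    linarith
  rw [one_div_mul_eq_div, le_div_iff₀ hlr]
  exact_mod_cast hlog
end

section
/- The function Φ(t) = (1/t² - 1/sinh²(t)) · log( (1 + 2t² - cosh(2t))(1 - coth(t)) / (2t³) ) satisfies lim_{t→∞} (t²/log t) · Φ(t) = -3. In particular Φ is integrable on (0,∞). -/
open Real Filter Set

-- cosh lower bound
lemma my_cosh_lower (x : ℝ) (hx : 0 ≤ x) : 1 + x^2/2 ≤ Real.cosh x := by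
  have h2 : Real.cosh (x/2)^2 = Real.sinh (x/2)^2 + 1 := Real.cosh_sq _
  have h3 : x/2 ≤ Real.sinh (x/2) := Real.self_le_sinh_iff.2 (by linarith)
  have h : Real.cosh x = 2 * Real.sinh (x/2)^2 + 1 := by
    have hh := Real.cosh_two_mul (x/2)
    rw [show 2*(x/2) = x by ring] at hh
    rw [hh, h2]; ring
  nlinarith [h3, hx]

-- sinh lower bound
lemma my_sinh_lower (t : ℝ) (ht : 0 ≤ t) : t + t^3/6 ≤ Real.sinh t := by
  set f : ℝ → ℝ := fun x => Real.sinh x - x - x^3/6 with hf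
  have hderiv : ∀ x : ℝ, HasDerivAt f (Real.cosh x - 1 - x^2/2) x := by
    intro x
    have h3 : HasDerivAt (fun x:ℝ => x^3/6) (3*x^2/6) x := by
      simpa using (hasDerivAt_pow 3 x).div_const 6
    have := ((Real.hasDerivAt_sinh x).sub (hasDerivAt_id x)).sub h3
    exact this.congr_deriv (by ring)
  have hmono : MonotoneOn f (Set.Ici 0) := by
    apply monotoneOn_of_deriv_nonneg (convex_Ici 0)
    · exact (Continuous.continuousOn (by continuity))
    · intro x _; exact (hderiv x).differentiableAt.differentiableWithinAt
    · intro x hx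
      rw [interior_Ici] at hx
      rw [(hderiv x).deriv]
      have := my_cosh_lower x (le_of_lt hx)
      linarith
  have := hmono (Set.self_mem_Ici) (Set.mem_Ici.2 ht) ht
  simp only [hf, Real.sinh_zero] at this
  norm_num at this
  linarith

-- sinh upper bound
lemma my_sinh_upper (t : ℝ) (ht : 0 ≤ t) : Real.sinh t ≤ t * Real.cosh t := by
  set f : ℝ → ℝ := fun x => x * Real.cosh x - Real.sinh x with hf
  have hderiv : ∀ x : ℝ, HasDerivAt f (x * Real.sinh x) x := by
    intro x
    have h1 := ((hasDerivAt_id x).mul (Real.hasDerivAt_cosh x)).sub (Real.hasDerivAt_sinh x)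
    exact h1.congr_deriv (by simp only [id]; ring)
  have hmono : MonotoneOn f (Set.Ici 0) := by
    apply monotoneOn_of_deriv_nonneg (convex_Ici 0)
    · exact (Continuous.continuousOn (by continuity))
    · intro x _; exact (hderiv x).differentiableAt.differentiableWithinAt
    · intro x hx
      rw [interior_Ici] at hx
      rw [(hderiv x).deriv]
      have h2 : 0 ≤ Real.sinh x := Real.sinh_nonneg_iff.2 hx.le
      exact mul_nonneg hx.le h2
  have := hmono (Set.self_mem_Ici) (Set.mem_Ici.2 ht) ht
  simp only [hf, Real.sinh_zero, Real.cosh_zero] at this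
  norm_num at this
  linarith

-- key algebraic rewrite of the log argument
lemma my_arg_rewrite (t : ℝ) (ht : 0 < t) :
    (1 + 2 * t ^ 2 - Real.cosh (2 * t)) * (1 - Real.cosh t / Real.sinh t) / (2 * t ^ 3)
      = Real.exp (-t) * (Real.sinh t ^ 2 - t ^ 2) / (t ^ 3 * Real.sinh t) := by
  have hs : Real.sinh t ≠ 0 := Real.sinh_ne_zero.2 ht.ne'
  have hc : Real.cosh t = Real.sinh t + Real.exp (-t) := by
    have := Real.cosh_sub_sinh t; linarith
  rw [Real.cosh_two_mul, Real.cosh_sq, hc]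
  field_simp
  ring

open Real Filter Set

noncomputable def myY (t : ℝ) : ℝ := Real.exp (-t) * (Real.sinh t ^ 2 - t ^ 2) / Real.sinh t

-- sinh is at least exp t / 4 for t ≥ 1
lemma my_sinh_big {t : ℝ} (ht : 1 ≤ t) : Real.exp t / 4 ≤ Real.sinh t := by
  rw [Real.sinh_eq]
  have h1 : Real.exp (-t) ≤ 1 := by
    rw [Real.exp_le_one_iff]; linarith
  have h2 : 2 ≤ Real.exp t := by
    calc (2:ℝ) ≤ Real.exp 1 := by
          have := Real.add_one_le_exp (1:ℝ); linarith
      _ ≤ Real.exp t := Real.exp_le_exp.2 ht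
  linarith

lemma my_B_tendsto : Tendsto (fun t : ℝ => 16 * (t ^ 2 * Real.exp (-(2*t)))) atTop (nhds 0) := by
  have h2t : Tendsto (fun t : ℝ => 2 * t) atTop atTop :=
    Tendsto.const_mul_atTop two_pos tendsto_id
  have h := (tendsto_pow_mul_exp_neg_atTop_nhds_zero 2).comp h2t
  have h4 : Tendsto (fun t : ℝ => 4 * ((2*t) ^ 2 * Real.exp (-(2*t)))) atTop (nhds (4 * 0)) :=
    h.const_mul 4
  rw [mul_zero] at h4
  refine h4.congr fun t => by ring

lemma my_t2_div_sinh2 : Tendsto (fun t : ℝ => t ^ 2 / Real.sinh t ^ 2) atTop (nhds 0) := by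
  apply squeeze_zero' (g := fun t : ℝ => 16 * (t ^ 2 * Real.exp (-(2*t))))
  · filter_upwards [eventually_ge_atTop (1:ℝ)] with t ht
    have := Real.sinh_pos_iff.2 (by linarith : (0:ℝ) < t)
    positivity
  · filter_upwards [eventually_ge_atTop (1:ℝ)] with t ht
    have hs := my_sinh_big ht
    have hsp : 0 < Real.sinh t := Real.sinh_pos_iff.2 (by linarith)
    have hep : 0 < Real.exp t := Real.exp_pos t
    have h2 : Real.exp t ^ 2 / 16 ≤ Real.sinh t ^ 2 := by nlinarith
    have h3 : t ^ 2 / Real.sinh t ^ 2 ≤ t ^ 2 / (Real.exp t ^ 2 / 16) := by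
      apply div_le_div_of_nonneg_left (by positivity) (by positivity) h2
    calc t ^ 2 / Real.sinh t ^ 2 ≤ t ^ 2 / (Real.exp t ^ 2 / 16) := h3
      _ = 16 * (t ^ 2 * Real.exp (-(2*t))) := by
          rw [show -(2*t) = -t + -t by ring, Real.exp_add, Real.exp_neg]
          field_simp
  · exact my_B_tendsto

lemma my_Y_tendsto : Tendsto myY atTop (nhds (1/2)) := by
  have term1 : Tendsto (fun t : ℝ => (1 - Real.exp (-(2*t))) / 2) atTop (nhds ((1 - 0)/2)) := by
    have h2t : Tendsto (fun t : ℝ => 2 * t) atTop atTop :=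
      Tendsto.const_mul_atTop two_pos tendsto_id
    have h := tendsto_exp_neg_atTop_nhds_zero.comp h2t
    exact (tendsto_const_nhds.sub h).div_const 2
  have term2 : Tendsto (fun t : ℝ => t ^ 2 * (Real.exp (-t) / Real.sinh t)) atTop (nhds 0) := by
    apply squeeze_zero' (g := fun t : ℝ => 16 * (t ^ 2 * Real.exp (-(2*t))))
    · filter_upwards [eventually_ge_atTop (1:ℝ)] with t ht
      have := Real.sinh_pos_iff.2 (by linarith : (0:ℝ) < t)
      positivity
    · filter_upwards [eventually_ge_atTop (1:ℝ)] with t ht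
      have hs := my_sinh_big ht
      have hsp : 0 < Real.sinh t := Real.sinh_pos_iff.2 (by linarith)
      have hep : 0 < Real.exp t := Real.exp_pos t
      have h1 : Real.exp (-t) / Real.sinh t ≤ Real.exp (-t) / (Real.exp t / 4) :=
        div_le_div_of_nonneg_left (Real.exp_pos _).le (by positivity) hs
      have h2 : Real.exp (-t) / (Real.exp t / 4) = 4 * Real.exp (-(2*t)) := by
        rw [show -(2*t) = -t + -t by ring, Real.exp_add, Real.exp_neg]
        field_simp
      have h3 : t ^ 2 * (Real.exp (-t) / Real.sinh t) ≤ t ^ 2 * (4 * Real.exp (-(2*t))) := by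
        apply mul_le_mul_of_nonneg_left _ (by positivity)
        rw [← h2]; exact h1
      calc t ^ 2 * (Real.exp (-t) / Real.sinh t) ≤ t ^ 2 * (4 * Real.exp (-(2*t))) := h3
        _ ≤ 16 * (t ^ 2 * Real.exp (-(2*t))) := by nlinarith [sq_nonneg t, Real.exp_pos (-(2*t))]
    · exact my_B_tendsto
  have hcombo := term1.sub term2
  norm_num at hcombo
  apply hcombo.congr'
  filter_upwards [eventually_ge_atTop (1:ℝ)] with t ht
  have hsp : 0 < Real.sinh t := Real.sinh_pos_iff.2 (by linarith)
  have hsinh : Real.exp (-t) * Real.sinh t = (1 - Real.exp (-(2*t))) / 2 := by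
    rw [Real.sinh_eq, show -(2*t) = -t + -t by ring, Real.exp_add, Real.exp_neg]
    field_simp
  show (1 - Real.exp (-(2*t))) / 2 - t ^ 2 * (Real.exp (-t) / Real.sinh t) = myY t
  rw [← hsinh]
  unfold myY
  field_simp

lemma my_phi_lim :
    Filter.Tendsto
      (fun t : ℝ => t ^ 2 / Real.log t *
        ((1 / t ^ 2 - 1 / Real.sinh t ^ 2) *
          Real.log ((1 + 2 * t ^ 2 - Real.cosh (2 * t)) *
            (1 - Real.cosh t / Real.sinh t) / (2 * t ^ 3))))
      Filter.atTop (nhds (-3)) := by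
  have hYlog : Tendsto (fun t => Real.log (myY t)) atTop (nhds (Real.log (1/2))) :=
    (Real.continuousAt_log (by norm_num)).tendsto.comp my_Y_tendsto
  have hinv : Tendsto (fun t : ℝ => (Real.log t)⁻¹) atTop (nhds 0) :=
    Real.tendsto_log_atTop.inv_tendsto_atTop
  have h4 : Tendsto (fun t => Real.log (myY t) / Real.log t) atTop (nhds 0) := by
    have := hYlog.mul hinv
    rw [mul_zero] at this
    exact this.congr fun t => (div_eq_mul_inv _ _).symm
  have hmain : Tendsto
      (fun t : ℝ => (1 - t ^ 2 / Real.sinh t ^ 2) * (Real.log (myY t) / Real.log t - 3))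
      atTop (nhds ((1 - 0) * ((0:ℝ) - 3))) :=
    (tendsto_const_nhds.sub my_t2_div_sinh2).mul (h4.sub tendsto_const_nhds)
  norm_num at hmain
  apply hmain.congr'
  filter_upwards [eventually_ge_atTop (2:ℝ)] with t ht
  have ht0 : 0 < t := by linarith
  have hsp : 0 < Real.sinh t := Real.sinh_pos_iff.2 ht0
  have hst : t < Real.sinh t := Real.self_lt_sinh_iff.2 ht0
  have hlogt : 0 < Real.log t := Real.log_pos (by linarith)
  have hYpos : 0 < myY t := by
    unfold myY
    have h1 : t ^ 2 < Real.sinh t ^ 2 := by nlinarith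
    have he := Real.exp_pos (-t)
    exact div_pos (mul_pos he (by linarith)) hsp
  have harg : (1 + 2 * t ^ 2 - Real.cosh (2 * t)) * (1 - Real.cosh t / Real.sinh t) / (2 * t ^ 3)
      = myY t / t ^ 3 := by
    rw [my_arg_rewrite t ht0]
    unfold myY
    field_simp
  rw [harg, Real.log_div hYpos.ne' (by positivity), Real.log_pow]
  push_cast
  field_simp

open Real Filter Set MeasureTheory

noncomputable def myPhi (t : ℝ) : ℝ :=
  (1 / t ^ 2 - 1 / Real.sinh t ^ 2) *
    Real.log ((1 + 2 * t ^ 2 - Real.cosh (2 * t)) *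
      (1 - Real.cosh t / Real.sinh t) / (2 * t ^ 3))

lemma myPhi_measurable : Measurable myPhi := by
  apply Measurable.mul
  · exact ((measurable_const.div (measurable_id.pow_const 2))).sub
      (measurable_const.div (Real.continuous_sinh.measurable.pow_const 2))
  · exact Real.measurable_log.comp <| ((((measurable_const.add
      (measurable_const.mul (measurable_id.pow_const 2))).sub
      (Real.continuous_cosh.measurable.comp (measurable_const.mul measurable_id))).mul
      (measurable_const.sub (Real.continuous_cosh.measurable.div Real.continuous_sinh.measurable))).div
      (measurable_const.mul (measurable_id.pow_const 3)))

lemma my_cosh_le_three {t : ℝ} (ht : |t| ≤ 1) : Real.cosh t ≤ 3 := by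
  have h1 : Real.cosh t ≤ Real.cosh 1 := Real.cosh_le_cosh.2 (by simpa using ht)
  have h2 : Real.cosh 1 = (Real.exp 1 + Real.exp (-1)) / 2 := Real.cosh_eq 1
  have h3 : Real.exp 1 < 2.7182818286 := Real.exp_one_lt_d9
  have h4 : Real.exp (-1) ≤ 1 := by rw [Real.exp_le_one_iff]; norm_num
  linarith

lemma my_exp_neg_ge {t : ℝ} (ht : t ≤ 1) : (1:ℝ)/3 ≤ Real.exp (-t) := by
  have h1 : Real.exp (-1) ≤ Real.exp (-t) := Real.exp_le_exp.2 (by linarith)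
  have h2 : Real.exp 1 < 3 := lt_trans Real.exp_one_lt_d9 (by norm_num)
  have h3 : Real.exp (-1) = (Real.exp 1)⁻¹ := Real.exp_neg 1
  have h4 : (0:ℝ) < Real.exp 1 := Real.exp_pos 1
  have h5 : (1:ℝ)/3 ≤ (Real.exp 1)⁻¹ := by
    rw [le_inv_comm₀ (by norm_num) h4]
    · linarith
  linarith [h3 ▸ h5, h1]

-- bound on (0,1]
lemma myPhi_bound {t : ℝ} (ht0 : 0 < t) (ht1 : t ≤ 1) : ‖myPhi t‖ ≤ 300 := by
  have hsp : 0 < Real.sinh t := Real.sinh_pos_iff.2 ht0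
  have hst : t < Real.sinh t := Real.self_lt_sinh_iff.2 ht0
  have hup : Real.sinh t ≤ t * Real.cosh t := my_sinh_upper t ht0.le
  have hch : Real.cosh t ≤ 3 := my_cosh_le_three (by rw [abs_of_pos ht0]; exact ht1)
  have hlo : t + t^3/6 ≤ Real.sinh t := my_sinh_lower t ht0.le
  have hs3t : Real.sinh t ≤ 3 * t := by nlinarith
  have hlow : t^4/3 ≤ Real.sinh t^2 - t^2 := by nlinarith
  have hcsq : Real.cosh t ^ 2 = Real.sinh t ^ 2 + 1 := Real.cosh_sq t
  have hhi : Real.sinh t^2 - t^2 ≤ 9 * t^4 := by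
    have hsq : Real.sinh t^2 ≤ t^2 * Real.cosh t^2 := by nlinarith
    have hA : Real.sinh t^2 - t^2 ≤ t^2 * Real.sinh t^2 := by nlinarith
    have hB : Real.sinh t^2 ≤ 9 * t^2 := by nlinarith
    nlinarith [mul_le_mul_of_nonneg_left hB (sq_nonneg t)]
  set X : ℝ := Real.exp (-t) * (Real.sinh t ^ 2 - t ^ 2) / (t ^ 3 * Real.sinh t) with hXdef
  have hXpos : 0 < X := by
    apply div_pos (mul_pos (Real.exp_pos _) (by nlinarith)) (by positivity)
  have hexp1 : Real.exp (-t) ≤ 1 := by rw [Real.exp_le_one_iff]; linarith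
  have hexp3 : (1:ℝ)/3 ≤ Real.exp (-t) := my_exp_neg_ge ht1
  have hXlo : (1:ℝ)/27 ≤ X := by
    rw [hXdef, le_div_iff₀ (by positivity)]
    nlinarith [mul_le_mul_of_nonneg_left hlow (le_of_lt (Real.exp_pos (-t))),
      mul_le_mul_of_nonneg_left hs3t (by positivity : (0:ℝ) ≤ t^3)]
  have hXhi : X ≤ 9 := by
    rw [hXdef, div_le_iff₀ (by positivity)]
    nlinarith [mul_le_mul_of_nonneg_left hst.le (by positivity : (0:ℝ) ≤ t^3)]
  have hlogX : |Real.log X| ≤ 26 := by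
    rw [abs_le]
    constructor
    · have h1 := Real.log_le_sub_one_of_pos (show (0:ℝ) < X⁻¹ by positivity)
      rw [Real.log_inv] at h1
      have h2 : X⁻¹ ≤ 27 := by
        rw [inv_le_comm₀ hXpos (by norm_num)]
        linarith
      linarith
    · have h1 := Real.log_le_sub_one_of_pos hXpos
      linarith
  have hA0 : 0 ≤ 1 / t ^ 2 - 1 / Real.sinh t ^ 2 := by
    have : 1 / Real.sinh t ^ 2 ≤ 1 / t ^ 2 :=
      one_div_le_one_div_of_le (by positivity) (by nlinarith)
    linarith
  have hA9 : 1 / t ^ 2 - 1 / Real.sinh t ^ 2 ≤ 9 := by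
    have heq : 1 / t ^ 2 - 1 / Real.sinh t ^ 2
        = (Real.sinh t^2 - t^2) / (t^2 * Real.sinh t^2) := by
      field_simp
    rw [heq, div_le_iff₀ (by positivity)]
    nlinarith
  unfold myPhi
  rw [my_arg_rewrite t ht0, ← hXdef]
  rw [norm_mul, Real.norm_eq_abs, Real.norm_eq_abs, abs_of_nonneg hA0]
  calc (1 / t ^ 2 - 1 / Real.sinh t ^ 2) * |Real.log X| ≤ 9 * 26 := by
        apply mul_le_mul hA9 hlogX (abs_nonneg _) (by norm_num)
    _ ≤ 300 := by norm_num

lemma myPhi_continuousOn {a b : ℝ} (ha : 1 ≤ a) : ContinuousOn myPhi (Icc a b) := by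
  have hts : ∀ t ∈ Icc a b, Real.sinh t ≠ 0 := fun t htm =>
    (Real.sinh_pos_iff.2 (by have := htm.1; linarith)).ne'
  have ht0 : ∀ t ∈ Icc a b, (0:ℝ) < t := fun t htm => by have := htm.1; linarith
  apply ContinuousOn.mul
  · apply ContinuousOn.sub
    · exact continuousOn_const.div (continuous_pow 2).continuousOn
        (fun t htm => by have := ht0 t htm; positivity)
    · exact continuousOn_const.div ((Real.continuous_sinh.pow 2)).continuousOn
        (fun t htm => pow_ne_zero 2 (hts t htm))
  · apply ContinuousOn.log
    · apply ContinuousOn.div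
      · apply ContinuousOn.mul
        · exact ((continuous_const.add (continuous_const.mul (continuous_pow 2))).sub
            (Real.continuous_cosh.comp (continuous_const.mul continuous_id))).continuousOn
        · exact continuousOn_const.sub
            (Real.continuous_cosh.continuousOn.div Real.continuous_sinh.continuousOn hts)
      · exact (continuous_const.mul (continuous_pow 3)).continuousOn
      · intro t htm
        have := ht0 t htm; positivity
    · intro t htm
      have h0 := ht0 t htm
      rw [my_arg_rewrite t h0]
      have hsp : 0 < Real.sinh t := Real.sinh_pos_iff.2 h0
      have hst : t < Real.sinh t := Real.self_lt_sinh_iff.2 h0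
      have : 0 < Real.sinh t ^ 2 - t ^ 2 := by nlinarith
      positivity

lemma myPhi_integrable : MeasureTheory.IntegrableOn myPhi (Set.Ioi 0) := by
  -- get the eventual bound from the limit
  have hev := (Metric.tendsto_nhds.mp my_phi_lim 1 one_pos)
  rw [eventually_atTop] at hev
  obtain ⟨a, ha⟩ := hev
  set R : ℝ := max a 3 with hR
  have hR3 : (3:ℝ) ≤ R := le_max_right a 3
  have hR1 : (1:ℝ) ≤ R := by linarith
  have hR0 : (0:ℝ) < R := by linarith
  have h1 : IntegrableOn myPhi (Ioc 0 1) := by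
    apply Measure.integrableOn_of_bounded (M := 300)
    · exact (measure_Ioc_lt_top).ne
    · exact myPhi_measurable.aestronglyMeasurable
    · rw [ae_restrict_iff' measurableSet_Ioc]
      exact ae_of_all _ fun t htm => myPhi_bound htm.1 htm.2
  have h2 : IntegrableOn myPhi (Ioc 1 R) := by
    exact ((myPhi_continuousOn le_rfl).integrableOn_Icc).mono_set Ioc_subset_Icc_self
  have h3 : IntegrableOn myPhi (Ioi R) := by
    have hg : IntegrableOn (fun t : ℝ => 8 * t ^ (-(3/2) : ℝ)) (Ioi R) :=
      (integrableOn_Ioi_rpow_of_lt (by norm_num) hR0).const_mul 8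
    apply Integrable.mono' hg myPhi_measurable.aestronglyMeasurable.restrict
    rw [ae_restrict_iff' measurableSet_Ioi]
    apply ae_of_all
    intro t htm
    rw [mem_Ioi] at htm
    have ht3 : (3:ℝ) ≤ t := le_trans hR3 htm.le
    have ht0 : (0:ℝ) < t := by linarith
    have hta : a ≤ t := le_trans (le_max_left a 3) htm.le
    have hgt := ha t hta
    rw [Real.dist_eq] at hgt
    obtain ⟨hgl, hgu⟩ := abs_lt.mp hgt
    have hlog1 : 1 ≤ Real.log t := by
      rw [Real.le_log_iff_exp_le ht0]
      calc Real.exp 1 ≤ 2.7182818286 := Real.exp_one_lt_d9.le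
        _ ≤ t := by linarith
    have hlogpos : 0 < Real.log t := by linarith
    -- myPhi t = g t * (log t / t^2)
    have hΦ : myPhi t = (t ^ 2 / Real.log t *
        ((1 / t ^ 2 - 1 / Real.sinh t ^ 2) *
          Real.log ((1 + 2 * t ^ 2 - Real.cosh (2 * t)) *
            (1 - Real.cosh t / Real.sinh t) / (2 * t ^ 3)))) * (Real.log t / t ^ 2) := by
      unfold myPhi
      field_simp
    have habs : ‖myPhi t‖ ≤ 4 * (Real.log t / t ^ 2) := by
      rw [hΦ, Real.norm_eq_abs, abs_mul]
      have h4 : |t ^ 2 / Real.log t *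
          ((1 / t ^ 2 - 1 / Real.sinh t ^ 2) *
            Real.log ((1 + 2 * t ^ 2 - Real.cosh (2 * t)) *
              (1 - Real.cosh t / Real.sinh t) / (2 * t ^ 3)))| ≤ 4 := by
        rw [abs_le]; constructor <;> linarith
      have hpos : (0:ℝ) ≤ Real.log t / t ^ 2 := by positivity
      calc _ ≤ 4 * |Real.log t / t ^ 2| :=
            mul_le_mul_of_nonneg_right h4 (abs_nonneg _)
        _ = 4 * (Real.log t / t ^ 2) := by rw [abs_of_nonneg hpos]
    -- log t ≤ 2 √t
    have hsqrt : Real.log t ≤ 2 * Real.sqrt t := by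
      have h5 := Real.log_le_sub_one_of_pos (Real.sqrt_pos.2 ht0)
      rw [Real.log_sqrt ht0.le] at h5
      have h6 : (0:ℝ) ≤ Real.sqrt t := Real.sqrt_nonneg t
      linarith
    have hrpow : Real.sqrt t / t ^ 2 = t ^ (-(3/2) : ℝ) := by
      rw [Real.sqrt_eq_rpow, ← Real.rpow_natCast t 2, ← Real.rpow_sub ht0]
      norm_num
    calc ‖myPhi t‖ ≤ 4 * (Real.log t / t ^ 2) := habs
      _ ≤ 8 * (Real.sqrt t / t ^ 2) := by
          rw [div_eq_mul_inv, div_eq_mul_inv]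
          nlinarith [mul_le_mul_of_nonneg_right hsqrt
            (show (0:ℝ) ≤ (t^2)⁻¹ by positivity)]
      _ = 8 * t ^ (-(3/2) : ℝ) := by rw [hrpow]
  have hunion1 : IntegrableOn myPhi (Ioc 1 R ∪ Ioi R) := h2.union h3
  rw [Ioc_union_Ioi_eq_Ioi hR1] at hunion1
  have hunion2 : IntegrableOn myPhi (Ioc 0 1 ∪ Ioi 1) := h1.union hunion1
  rwa [Ioc_union_Ioi_eq_Ioi zero_le_one] at hunion2


/-- The function `Φ(t) = (1/t² - 1/sinh²t) log((1 + 2t² - cosh 2t)(1 - coth t)/(2t³))`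
satisfies `(t²/log t) Φ(t) → -3` as `t → ∞`; in particular `Φ` is integrable on `(0,∞)`. -/
theorem Phi_tendsto_at_top_and_integrable :
    Filter.Tendsto
      (fun t : ℝ => t ^ 2 / Real.log t *
        ((1 / t ^ 2 - 1 / Real.sinh t ^ 2) *
          Real.log ((1 + 2 * t ^ 2 - Real.cosh (2 * t)) *
            (1 - Real.cosh t / Real.sinh t) / (2 * t ^ 3))))
      Filter.atTop (nhds (-3)) ∧
    MeasureTheory.IntegrableOn
      (fun t : ℝ => (1 / t ^ 2 - 1 / Real.sinh t ^ 2) *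
        Real.log ((1 + 2 * t ^ 2 - Real.cosh (2 * t)) *
          (1 - Real.cosh t / Real.sinh t) / (2 * t ^ 3)))
      (Set.Ioi 0) := by
  exact ⟨my_phi_lim, myPhi_integrable⟩
end

section
/- For r ∈ [0,1], θ with n^{-1/2} ≤ |θ| ≤ π - n^{-1/2}, and ℓ ∈ {0,1,2}, the trigonometric sums satisfy |∑_{k=0}^n r^k k^ℓ cos(kθ)| ≤ 8 n^{1/2+ℓ} and |∑_{k=0}^n r^k k^ℓ sin(kθ)| ≤ 8 n^{1/2+ℓ}. -/
set_option maxHeartbeats 1000000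

open Finset in
lemma tsb_aux1 (z : ℂ) (n : ℕ) :
    (∑ k ∈ range (n+1), (k:ℂ) * z^k) * (1 - z)
      = (∑ k ∈ range (n+1), z^k) - 1 - (n:ℂ) * z^(n+1) := by
  induction n with
  | zero => simp
  | succ m ih =>
    rw [Finset.sum_range_succ, Finset.sum_range_succ (f := fun k => z^k)]
    push_cast
    push_cast at ih
    linear_combination ih

open Finset in
lemma tsb_aux2 (z : ℂ) (n : ℕ) :
    (∑ k ∈ range (n+1), (k:ℂ)^2 * z^k) * (1 - z)
      = 2 * (∑ k ∈ range (n+1), (k:ℂ) * z^k) - (∑ k ∈ range (n+1), z^k)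
        + 1 - (n:ℂ)^2 * z^(n+1) := by
  induction n with
  | zero => simp
  | succ m ih =>
    rw [Finset.sum_range_succ, Finset.sum_range_succ (f := fun k => z^k),
      Finset.sum_range_succ (f := fun k => (k:ℂ) * z^k)]
    push_cast
    push_cast at ih
    linear_combination ih

lemma tsb_abs_sub (a b : ℂ) : norm (a - b) ≤ norm a + norm b := by
  simpa [sub_eq_add_neg] using norm_add_le a (-b)

lemma tsb_arith (N s cG cT cU : ℝ) (hG0 : 0 ≤ cG) (hT0 : 0 ≤ cT)
    (hs7 : 7 ≤ s) (hss : s^2 = N)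
    (hG : cG ≤ 2*(2*s)) (hT : cT ≤ (cG+1+N)*(2*s))
    (hU : cU ≤ (2*cT+cG+1+N^2)*(2*s)) :
    cG ≤ 8*s ∧ cT ≤ 8*s*N ∧ cU ≤ 8*s*N^2 := by
  have hs0 : (0:ℝ) ≤ s := by linarith
  have hN49 : 49 ≤ N := by nlinarith
  have hsN : s ≤ N := by nlinarith
  have h7N : 7*N ≤ s*N := by nlinarith
  have hss2 : s^2*N = N^2 := by rw [hss]; ring
  have hT' : cT ≤ 8*N + 2*s + 2*(s*N) := by
    have e1 := mul_le_mul_of_nonneg_right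
      (show cG + 1 + N ≤ 4*s + 1 + N by linarith)
      (show (0:ℝ) ≤ 2*s by linarith)
    nlinarith [e1, hss]
  have hTfin : cT ≤ 8*s*N := by linarith
  refine ⟨by linarith, hTfin, ?_⟩
  have e2 := mul_le_mul_of_nonneg_right
    (show 2*cT + cG + 1 + N^2 ≤ 2*(8*N + 2*s + 2*(s*N)) + 4*s + 1 + N^2 by linarith)
    (show (0:ℝ) ≤ 2*s by linarith)
  have hU' : cU ≤ 32*(s*N) + 16*N + 8*N^2 + 2*s + 2*(s*N^2) := by nlinarith [e2, hss, hss2]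
  have hB : 49*(s*N) ≤ s*N^2 := by nlinarith [mul_nonneg hs0 (show (0:ℝ) ≤ N by linarith)]
  have hC : 7*N^2 ≤ s*N^2 := by nlinarith [sq_nonneg N]
  have hD : 49*N ≤ N^2 := by nlinarith
  linarith [hU', hB, hC, hD, hsN]

lemma tsb_key (n : ℕ) (hn : 1 ≤ n) (r : ℝ) (hr0 : 0 ≤ r) (hr1 : r ≤ 1)
    (θ : ℝ) (h1 : ((n : ℝ) ^ ((-1:ℝ)/2)) ≤ |θ|) (h2 : |θ| ≤ Real.pi - (n : ℝ) ^ ((-1:ℝ)/2))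
    (ℓ : ℕ) (hℓ : ℓ ∈ ({0, 1, 2} : Set ℕ)) :
    norm (∑ k ∈ Finset.range (n+1), ((r:ℂ) * Complex.exp (θ * Complex.I)) ^ k * (k:ℂ) ^ ℓ)
      ≤ 8 * (n : ℝ) ^ ((1:ℝ)/2 + ℓ) := by
  have hN1 : (1:ℝ) ≤ (n:ℝ) := by exact_mod_cast hn
  have hN0 : (0:ℝ) < (n:ℝ) := by linarith
  set z : ℂ := (r:ℂ) * Complex.exp (θ * Complex.I) with hzdef
  set S : ℂ := ∑ k ∈ Finset.range (n+1), z ^ k * (k:ℂ) ^ ℓ with hSdef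
  have hzabs : norm z = r := by
    rw [hzdef, norm_mul, Complex.norm_exp_ofReal_mul_I, mul_one, Complex.norm_real, Real.norm_eq_abs,
      _root_.abs_of_nonneg hr0]
  have hzpow : ∀ m : ℕ, norm (z ^ m) ≤ 1 := fun m => by
    rw [norm_pow, hzabs]; exact pow_le_one₀ hr0 hr1
  set s : ℝ := Real.sqrt n with hsdef
  have hss : s ^ 2 = (n:ℝ) := Real.sq_sqrt hN0.le
  have hs0 : (0:ℝ) ≤ s := Real.sqrt_nonneg _
  have hs1 : (1:ℝ) ≤ s := by nlinarith
  have hrpow : (8:ℝ) * (n:ℝ) ^ ((1:ℝ)/2 + ℓ) = 8 * s * (n:ℝ) ^ ℓ := by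
    rw [Real.rpow_add hN0, Real.rpow_natCast, hsdef, Real.sqrt_eq_rpow]; ring
  rw [hrpow]
  have hNpow : (0:ℝ) ≤ (n:ℝ) ^ ℓ := by positivity
  rcases le_or_gt (n:ℝ) 61 with hn61 | hn61
  · -- trivial bound for small n
    have htriv : norm S ≤ ((n:ℝ) + 1) * (n:ℝ) ^ ℓ := by
      calc norm S ≤ ∑ k ∈ Finset.range (n+1), norm (z ^ k * (k:ℂ) ^ ℓ) := by
            rw [hSdef]; exact norm_sum_le _ _
        _ ≤ ∑ _k ∈ Finset.range (n+1), (n:ℝ) ^ ℓ := by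
            refine Finset.sum_le_sum fun k hk => ?_
            have hk' : (k:ℝ) ≤ (n:ℝ) := by
              exact_mod_cast Nat.lt_succ_iff.mp (Finset.mem_range.mp hk)
            rw [norm_mul, norm_pow, norm_pow, Complex.norm_natCast]
            have e1 : norm z ^ k ≤ 1 := by rw [hzabs]; exact pow_le_one₀ hr0 hr1
            have e2 : (k:ℝ) ^ ℓ ≤ (n:ℝ) ^ ℓ := pow_le_pow_left₀ (by positivity) hk' ℓ
            have e3 : (0:ℝ) ≤ (k:ℝ) ^ ℓ := by positivity
            nlinarith [pow_nonneg (norm_nonneg z) k]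
        _ = ((n:ℝ) + 1) * (n:ℝ) ^ ℓ := by
            rw [Finset.sum_const, Finset.card_range, nsmul_eq_mul]; push_cast; ring
    have h8 : (n:ℝ) + 1 ≤ 8 * s := by nlinarith
    calc norm S ≤ ((n:ℝ) + 1) * (n:ℝ) ^ ℓ := htriv
      _ ≤ 8 * s * (n:ℝ) ^ ℓ := by nlinarith
  · -- analytic bound for n ≥ 62
    set x : ℝ := (n:ℝ) ^ ((-1:ℝ)/2) with hxdef
    have hx0 : 0 < x := Real.rpow_pos_of_pos hN0 _
    have hx1 : x ≤ 1 := Real.rpow_le_one_of_one_le_of_nonpos hN1 (by norm_num)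
    have hxs : x * s = 1 := by
      rw [hxdef, hsdef, Real.sqrt_eq_rpow, ← Real.rpow_add hN0]; norm_num
    have hpi : (3:ℝ) < Real.pi := Real.pi_gt_three
    have hsinx : x / 2 ≤ Real.sin x := by
      have h3 := Real.sin_gt_sub_cube hx0
      have h4 : x ^ 3 ≤ x := by
        simpa using pow_le_pow_of_le_one hx0.le hx1 (show 1 ≤ 3 by norm_num)
      linarith
    have hsinmono : Real.sin x ≤ Real.sin |θ| := by
      rcases le_or_gt |θ| (Real.pi/2) with h | h
      · exact Real.strictMonoOn_sin.monotoneOn ⟨by linarith, by linarith⟩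
          ⟨by linarith [abs_nonneg θ], h⟩ h1
      · rw [← Real.sin_pi_sub |θ|]
        exact Real.strictMonoOn_sin.monotoneOn ⟨by linarith, by linarith⟩
          ⟨by linarith, by linarith⟩ (by linarith)
    have hsinθ : Real.sin x ^ 2 ≤ Real.sin θ ^ 2 := by
      have habs : Real.sin |θ| ^ 2 = Real.sin θ ^ 2 := by
        rcases abs_cases θ with ⟨h, _⟩ | ⟨h, _⟩ <;> rw [h] <;> simp [Real.sin_neg]
      rw [← habs]
      exact pow_le_pow_left₀ (by linarith) hsinmono 2
    set δ : ℝ := norm (1 - z) with hδdef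
    have hδ0' : (0:ℝ) ≤ δ := norm_nonneg _
    have hδsq : δ ^ 2 = (1 - r * Real.cos θ) ^ 2 + (r * Real.sin θ) ^ 2 := by
      rw [hδdef, Complex.sq_norm, Complex.normSq_apply, hzdef]
      simp [Complex.exp_ofReal_mul_I_re, Complex.exp_ofReal_mul_I_im]
      ring
    have hδx : x / 2 ≤ δ := by
      have h5 : Real.sin x ^ 2 ≤ δ ^ 2 := by
        nlinarith [Real.sin_sq_add_cos_sq θ, sq_nonneg (r - Real.cos θ)]
      nlinarith
    have hδ0 : 0 < δ := by linarith
    have hinv : 1 ≤ 2 * s * δ := by nlinarith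
    have hs7 : (7:ℝ) ≤ s := by nlinarith
    set G : ℂ := ∑ k ∈ Finset.range (n+1), z ^ k with hGdef
    set T : ℂ := ∑ k ∈ Finset.range (n+1), (k:ℂ) * z ^ k with hTdef
    set U : ℂ := ∑ k ∈ Finset.range (n+1), (k:ℂ) ^ 2 * z ^ k with hUdef
    have hmul : ∀ a b : ℝ, 0 ≤ b → a * δ ≤ b → a ≤ b * (2 * s) := by
      intro a b hb h
      rcases le_or_gt a 0 with ha | ha
      · nlinarith
      · nlinarith
    have hGδ : norm G * δ ≤ 2 := by
      have hid := geom_sum_mul z (n+1)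
      calc norm G * δ = norm (G * (z - 1)) := by
            rw [norm_mul, hδdef, norm_sub_rev]
        _ = norm (z ^ (n+1) - 1) := by rw [hid]
        _ ≤ norm (z ^ (n+1)) + norm 1 := tsb_abs_sub _ _
        _ ≤ 2 := by have := hzpow (n+1); rw [norm_one]; linarith
    have hG : norm G ≤ 2 * (2 * s) := hmul _ _ (by norm_num) hGδ
    have hTδ : norm T * δ ≤ norm G + 1 + (n:ℝ) := by
      have hid := tsb_aux1 z n
      calc norm T * δ = norm (T * (1 - z)) := by rw [norm_mul, hδdef]
        _ = norm (G - 1 - (n:ℂ) * z ^ (n+1)) := by rw [hid]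
        _ ≤ norm (G - 1) + norm ((n:ℂ) * z ^ (n+1)) := tsb_abs_sub _ _
        _ ≤ (norm G + 1) + (n:ℝ) := by
            have e1 : norm (G - 1) ≤ norm G + 1 := by
              simpa using tsb_abs_sub G 1
            have e2 : norm ((n:ℂ) * z ^ (n+1)) ≤ (n:ℝ) := by
              rw [norm_mul, Complex.norm_natCast]
              have := hzpow (n+1)
              nlinarith [norm_nonneg (z ^ (n+1))]
            linarith
        _ = norm G + 1 + (n:ℝ) := by ring
    have hT : norm T ≤ (norm G + 1 + (n:ℝ)) * (2 * s) :=
      hmul _ _ (by positivity) hTδ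
    have hUδ : norm U * δ ≤ 2 * norm T + norm G + 1 + (n:ℝ)^2 := by
      have hid := tsb_aux2 z n
      calc norm U * δ = norm (U * (1 - z)) := by rw [norm_mul, hδdef]
        _ = norm (2 * T - G + 1 - (n:ℂ)^2 * z ^ (n+1)) := by rw [hid]
        _ ≤ norm (2 * T - G + 1) + norm ((n:ℂ)^2 * z ^ (n+1)) :=
            tsb_abs_sub _ _
        _ ≤ 2 * norm T + norm G + 1 + (n:ℝ)^2 := by
            have e1 : norm (2 * T - G + 1) ≤ norm (2 * T - G) + 1 := by
              simpa using norm_add_le (2 * T - G) 1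
            have e2 : norm (2 * T - G) ≤ 2 * norm T + norm G := by
              have := tsb_abs_sub (2 * T) G
              simpa [norm_mul] using this
            have e3 : norm ((n:ℂ)^2 * z ^ (n+1)) ≤ (n:ℝ)^2 := by
              rw [norm_mul, norm_pow, Complex.norm_natCast]
              have h6 := hzpow (n+1)
              nlinarith [norm_nonneg (z ^ (n+1)), sq_nonneg (n:ℝ)]
            linarith
    have hU : norm U ≤ (2 * norm T + norm G + 1 + (n:ℝ)^2) * (2 * s) :=
      hmul _ _ (by positivity) hUδ
    have harith := tsb_arith (n:ℝ) s (norm G) (norm T) (norm U)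
      (norm_nonneg G) (norm_nonneg T) hs7 hss hG hT hU
    simp only [Set.mem_insert_iff, Set.mem_singleton_iff] at hℓ
    rcases hℓ with h | h | h <;> subst h
    · have hSG : S = G := by
        rw [hSdef, hGdef]; exact Finset.sum_congr rfl fun k _ => by ring
      rw [hSG]
      simp only [pow_zero, mul_one]
      exact harith.1
    · have hST : S = T := by
        rw [hSdef, hTdef]; exact Finset.sum_congr rfl fun k _ => by ring
      rw [hST]
      simpa using harith.2.1
    · have hSU : S = U := by
        rw [hSdef, hUdef]; exact Finset.sum_congr rfl fun k _ => by ring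
      rw [hSU]
      exact harith.2.2

/-- For `r ∈ [0,1]`, `n^{-1/2} ≤ |θ| ≤ π - n^{-1/2}` and `ℓ ∈ {0, 1, 2}`,
`|∑_{k=0}^n r^k k^ℓ cos(kθ)| ≤ 8 n^{1/2+ℓ}` and likewise for `sin`. -/
theorem trig_sum_bound (n : ℕ) (hn : 1 ≤ n) (r : ℝ) (hr : r ∈ Set.Icc (0:ℝ) 1)
    (θ : ℝ) (h1 : ((n : ℝ) ^ ((-1:ℝ)/2)) ≤ |θ|) (h2 : |θ| ≤ Real.pi - (n : ℝ) ^ ((-1:ℝ)/2))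
    (ℓ : ℕ) (hℓ : ℓ ∈ ({0, 1, 2} : Set ℕ)) :
    |∑ k ∈ Finset.range (n + 1), r ^ k * (k : ℝ) ^ ℓ * Real.cos (k * θ)|
        ≤ 8 * (n : ℝ) ^ ((1:ℝ)/2 + ℓ) ∧
    |∑ k ∈ Finset.range (n + 1), r ^ k * (k : ℝ) ^ ℓ * Real.sin (k * θ)|
        ≤ 8 * (n : ℝ) ^ ((1:ℝ)/2 + ℓ) := by
  obtain ⟨hr0, hr1⟩ := hr
  set z : ℂ := (r:ℂ) * Complex.exp (θ * Complex.I) with hzdef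
  set S : ℂ := ∑ k ∈ Finset.range (n+1), z ^ k * (k:ℂ) ^ ℓ with hSdef
  have hterm : ∀ k : ℕ, z ^ k * (k:ℂ) ^ ℓ
      = ((r ^ k * (k:ℝ) ^ ℓ : ℝ) : ℂ) * Complex.exp ((k * θ : ℝ) * Complex.I) := by
    intro k
    rw [hzdef, mul_pow, ← Complex.exp_nat_mul]
    push_cast
    ring_nf
  have hre : S.re = ∑ k ∈ Finset.range (n+1), r ^ k * (k:ℝ) ^ ℓ * Real.cos (k * θ) := by
    rw [hSdef, Complex.re_sum]
    refine Finset.sum_congr rfl fun k _ => ?_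
    rw [hterm k, Complex.re_ofReal_mul, Complex.exp_ofReal_mul_I_re]
  have him : S.im = ∑ k ∈ Finset.range (n+1), r ^ k * (k:ℝ) ^ ℓ * Real.sin (k * θ) := by
    rw [hSdef, Complex.im_sum]
    refine Finset.sum_congr rfl fun k _ => ?_
    rw [hterm k, Complex.im_ofReal_mul, Complex.exp_ofReal_mul_I_im]
  have key : norm S ≤ 8 * (n : ℝ) ^ ((1:ℝ)/2 + ℓ) :=
    tsb_key n hn r hr0 hr1 θ h1 h2 ℓ hℓ
  rw [← hre, ← him]
  exact ⟨(Complex.abs_re_le_norm S).trans key, (Complex.abs_im_le_norm S).trans key⟩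
end
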